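/- Let G = (V, E) be a finite connected simple graph. Let ~ be the smallest equivalence relation on the edge set E such that e ~ e′ whenever there exists a cycle of G containing both edges e and e′ (the equivalence classes of ~ are the maximal circuit-connected subsets of E). Then Σ_{C ∈ E/~} (|C| − 1) = |E| + |V| − Σ_{v ∈ V} c(G − v) − 1, where for each vertex v, c(G − v) denotes the number of connected components of the graph obtained from G by deleting v and all edges incident to v. -/

import Mathlib

/-- Two edges of a simple graph lie on a common cycle. -/
def SimpleGraph.OnCommonCycle {V : Type*} (G : SimpleGraph V) (e e' : G.edgeSet) : Prop :=
  ∃ (v : V) (c : G.Walk v v), c.IsCycle ∧ (e : Sym2 V) ∈ c.edges ∧ (e' : Sym2 V) ∈ c.edges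

open SimpleGraph Relation

namespace CircuitAux

variable {V : Type*} [DecidableEq V]

section Defs
variable (G : SimpleGraph V)

abbrev Cl := Quotient (Relation.EqvGen.setoid G.OnCommonCycle)

/-- the class `C` has an edge containing `v`, i.e. `v` is a vertex of the block `C`. -/
def Covers (C : Cl G) (v : V) : Prop :=
  ∃ e : G.edgeSet, Quotient.mk (Relation.EqvGen.setoid G.OnCommonCycle) e = C ∧ v ∈ (e : Sym2 V)

/-- the block-cut-vertex incidence graph -/
def B : SimpleGraph (V ⊕ Cl G) where
  Adj a b := (∃ w C, Covers G C w ∧ a = .inl w ∧ b = .inr C) ∨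
    (∃ w C, Covers G C w ∧ a = .inr C ∧ b = .inl w)
  symm := by
    constructor
    rintro a b (⟨w, C, h, rfl, rfl⟩ | ⟨w, C, h, rfl, rfl⟩)
    exacts [Or.inr ⟨w, C, h, rfl, rfl⟩, Or.inl ⟨w, C, h, rfl, rfl⟩]
  loopless := by
    constructor
    rintro a (⟨w, C, h, rfl, h2⟩ | ⟨w, C, h, rfl, h2⟩) <;> simp at h2

end Defs

variable {G : SimpleGraph V}

/-- A walk staying in `s` gives reachability in the induced graph. -/
lemma reach_induce_of_walk {s : Set V} {a b : V} (p : G.Walk a b)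
    (hp : ∀ z ∈ p.support, z ∈ s) :
    (G.induce s).Reachable ⟨a, hp a p.start_mem_support⟩ ⟨b, hp b p.end_mem_support⟩ := by
  induction p with
  | nil => rfl
  | @cons a c b h p ih =>
      have ha : a ∈ s := hp a (by simp)
      have hc : c ∈ s := hp c (by simp)
      have step : (G.induce s).Adj ⟨a, ha⟩ ⟨c, hc⟩ := h
      exact step.reachable.trans (ih (fun z hz => hp z (by simp [hz])))

lemma reach_induce_compl_of_walk {v a b : V} (p : G.Walk a b) (hp : v ∉ p.support)
    (ha : a ≠ v) (hb : b ≠ v) :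
    (G.induce ({v}ᶜ : Set V)).Reachable ⟨a, ha⟩ ⟨b, hb⟩ := by
  have := reach_induce_of_walk (s := ({v}ᶜ : Set V)) p
    (fun z hz => by simp only [Set.mem_compl_singleton_iff]; rintro rfl; exact hp hz)
  exact this

/-- For a walk `p : u → v` with nodup support, any `x ≠ v` on it is reachable
from `u` in `G - v`. -/
lemma reach_of_path_to {v u x : V} (p : G.Walk u v) (hN : p.support.Nodup)
    (hx : x ∈ p.support) (hxv : x ≠ v) (huv : u ≠ v) :
    (G.induce ({v}ᶜ : Set V)).Reachable ⟨u, huv⟩ ⟨x, hxv⟩ := by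
  have hvq : v ∉ (p.takeUntil x hx).support := by
    intro hv
    have hsupp : p.support = (p.takeUntil x hx).support ++ (p.dropUntil x hx).support.tail := by
      conv_lhs => rw [← p.take_spec hx]
      rw [SimpleGraph.Walk.support_append]
    have hd : v ∈ (p.dropUntil x hx).support.tail := by
      have hvd : v ∈ (p.dropUntil x hx).support := SimpleGraph.Walk.end_mem_support _
      rw [SimpleGraph.Walk.support_eq_cons] at hvd
      rcases List.mem_cons.mp hvd with h' | h'
      · exact absurd h'.symm hxv
      · exact h'
    rw [hsupp] at hN
    exact (List.disjoint_of_nodup_append hN) hv hd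
  exact reach_induce_compl_of_walk (p.takeUntil x hx) hvq huv hxv

/-- two non-`v` vertices on a cycle based at `v` are connected avoiding `v`. -/
lemma cycle_reach_closed (v : V) (c : G.Walk v v) (hc : c.IsCycle)
    {x y : V} (hx : x ∈ c.support) (hy : y ∈ c.support) (hxv : x ≠ v) (hyv : y ≠ v) :
    (G.induce ({v}ᶜ : Set V)).Reachable ⟨x, hxv⟩ ⟨y, hyv⟩ := by
  cases c with
  | nil => simp at hx; exact absurd hx hxv
  | @cons _ u _ h p =>
      have hu : u ≠ v := h.ne'
      have hN : p.support.Nodup := by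
        have := hc.support_nodup
        simpa using this
      have hx' : x ∈ p.support := by
        rcases (SimpleGraph.Walk.mem_support_iff _).mp hx with h' | h'
        · exact absurd h' hxv
        · exact h'
      have hy' : y ∈ p.support := by
        rcases (SimpleGraph.Walk.mem_support_iff _).mp hy with h' | h'
        · exact absurd h' hyv
        · exact h'
      exact (reach_of_path_to p hN hx' hxv hu).symm.trans (reach_of_path_to p hN hy' hyv hu)

lemma end_mem_tail_support_closed {u : V} (p : G.Walk u u) (hp : ¬ p.Nil) :
    u ∈ p.support.tail := by
  cases p with
  | nil => simp at hp
  | cons h q => simpa using q.end_mem_support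

/-- two non-`v` vertices on any cycle are connected avoiding `v`. -/
lemma cycle_reach (v : V) {w : V} (c : G.Walk w w) (hc : c.IsCycle)
    {x y : V} (hx : x ∈ c.support) (hy : y ∈ c.support) (hxv : x ≠ v) (hyv : y ≠ v) :
    (G.induce ({v}ᶜ : Set V)).Reachable ⟨x, hxv⟩ ⟨y, hyv⟩ := by
  by_cases hv : v ∈ c.support
  · have hrot := hc.rotate hv
    have hmem : ∀ z, z ∈ c.support → z ∈ (c.rotate v hv).support := by
      intro z hz
      have htail : z ∈ c.support.tail := by
        rw [SimpleGraph.Walk.support_eq_cons] at hz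
        rcases List.mem_cons.mp hz with rfl | hz2
        · exact end_mem_tail_support_closed c hc.not_nil
        · exact hz2
      exact List.mem_of_mem_tail
        ((SimpleGraph.Walk.support_rotate c v hv).mem_iff.mpr htail)
    exact cycle_reach_closed v (c.rotate v hv) hrot (hmem x hx) (hmem y hy) hxv hyv
  · have hw : w ≠ v := fun h => hv (h ▸ c.start_mem_support)
    have hrx : (G.induce ({v}ᶜ : Set V)).Reachable ⟨w, hw⟩ ⟨x, hxv⟩ := by
      refine reach_induce_compl_of_walk (c.takeUntil x hx) (fun hvv => hv ?_) hw hxv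
      exact SimpleGraph.Walk.support_takeUntil_subset _ _ hvv
    have hry : (G.induce ({v}ᶜ : Set V)).Reachable ⟨w, hw⟩ ⟨y, hyv⟩ := by
      refine reach_induce_compl_of_walk (c.takeUntil y hy) (fun hvv => hv ?_) hw hyv
      exact SimpleGraph.Walk.support_takeUntil_subset _ _ hvv
    exact hrx.symm.trans hry

lemma mem_support_of_mem_edge {u w x : V} {p : G.Walk u w} {e : Sym2 V}
    (he : e ∈ p.edges) (hx : x ∈ e) : x ∈ p.support := by
  obtain ⟨y, rfl⟩ := Sym2.mem_iff_exists.mp hx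
  exact p.fst_mem_support_of_mem_edges he

/-- two distinct non-`v` endpoints of a single edge are reachable avoiding `v`. -/
lemma reach_same_edge (v : V) (e : G.edgeSet) {x y : V}
    (hx : x ∈ (e : Sym2 V)) (hy : y ∈ (e : Sym2 V)) (hxv : x ≠ v) (hyv : y ≠ v) :
    (G.induce ({v}ᶜ : Set V)).Reachable ⟨x, hxv⟩ ⟨y, hyv⟩ := by
  obtain ⟨z, hz⟩ := e
  induction z with
  | _ a b =>
      by_cases hxy : x = y
      · subst hxy; rfl
      · have hadj : G.Adj x y := by
          simp only [Sym2.mem_iff] at hx hy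
          rcases hx with rfl | rfl <;> rcases hy with rfl | rfl
          · exact absurd rfl hxy
          · exact hz
          · exact hz.symm
          · exact absurd rfl hxy
        exact SimpleGraph.Adj.reachable (by exact hadj :
          (G.induce ({v}ᶜ : Set V)).Adj ⟨x, hxv⟩ ⟨y, hyv⟩)

/-- non-`v` endpoints of circuit-equivalent edges are reachable avoiding `v`. -/
lemma class_reach (v : V) {e e' : G.edgeSet}
    (h : Relation.EqvGen G.OnCommonCycle e e') {x y : V}
    (hx : x ∈ (e : Sym2 V)) (hy : y ∈ (e' : Sym2 V)) (hxv : x ≠ v) (hyv : y ≠ v) :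
    (G.induce ({v}ᶜ : Set V)).Reachable ⟨x, hxv⟩ ⟨y, hyv⟩ := by
  induction h generalizing x y with
  | rel e e' hr =>
      obtain ⟨w, c, hc, he, he'⟩ := hr
      exact cycle_reach v c hc (mem_support_of_mem_edge he hx)
        (mem_support_of_mem_edge he' hy) hxv hyv
  | refl e => exact reach_same_edge v e hx hy hxv hyv
  | symm e e' _ ih => exact (ih hy hx hyv hxv).symm
  | trans e e' e'' _ _ ih1 ih2 =>
      have hd : ¬ (e' : Sym2 V).IsDiag := G.not_isDiag_of_mem_edgeSet e'.2
      set a := (e' : Sym2 V).out.1 with ha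
      set b := (e' : Sym2 V).out.2 with hb
      have hne : a ≠ b := by
        intro h
        exact hd (by rw [← (e' : Sym2 V).out_eq]; exact Sym2.isDiag_iff_proj_eq.mpr h)
      by_cases hav : a = v
      · have hbv : b ≠ v := fun hb => hne (by rw [hav, hb])
        have hbm : b ∈ (e' : Sym2 V) := Sym2.out_snd_mem _
        exact (ih1 hx hbm hxv hbv).trans (ih2 hbm hy hbv hyv)
      · have ham : a ∈ (e' : Sym2 V) := Sym2.out_fst_mem _
        exact (ih1 hx ham hxv hav).trans (ih2 ham hy hav hyv)

/-- Key B: if two neighbours of `v` are connected avoiding `v`, the corresponding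
edges at `v` are circuit-equivalent. -/
lemma eqvGen_of_adj_reach (v : V) {x y : V} (hx : G.Adj v x) (hy : G.Adj v y)
    (hr : (G.induce ({v}ᶜ : Set V)).Reachable ⟨x, hx.ne'⟩ ⟨y, hy.ne'⟩) :
    Relation.EqvGen G.OnCommonCycle ⟨s(v,x), hx⟩ ⟨s(v,y), hy⟩ := by
  by_cases hxy : x = y
  · subst hxy; exact Relation.EqvGen.refl _
  · obtain ⟨p0⟩ := hr
    let pG : G.Walk x y := p0.map (SimpleGraph.Embedding.induce ({v}ᶜ : Set V)).toHom
    have hvp : v ∉ pG.support := by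
      simp only [pG, SimpleGraph.Walk.support_map, List.mem_map]
      intro hm
      have h2 := SimpleGraph.Walk.support_map (SimpleGraph.Embedding.induce ({v}ᶜ : Set V)).toHom p0
      obtain ⟨⟨z, hz⟩, hmem, hzv⟩ := List.mem_map.mp (Eq.mp (congrArg (v ∈ ·) h2) hm)
      exact hz hzv
    set P : G.Walk x y := (pG.toPath : G.Walk x y) with hPdef
    have hP : P.IsPath := pG.toPath.2
    have hvP : v ∉ P.support := fun h => hvp (pG.support_toPath_subset h)
    set c : G.Walk v v := SimpleGraph.Walk.cons hx (P.concat hy.symm) with hcdef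
    have hsupp : c.support = v :: (P.support ++ [v]) := by
      simp [hcdef, SimpleGraph.Walk.support_concat, List.concat_eq_append]
    have hedges : c.edges = s(v,x) :: (P.edges ++ [s(y,v)]) := by
      simp [hcdef, SimpleGraph.Walk.edges_concat, List.concat_eq_append]
    have hvxP : s(v,x) ∉ P.edges := fun h => hvP (P.fst_mem_support_of_mem_edges h)
    have hyvP : s(y,v) ∉ P.edges := fun h => hvP (P.snd_mem_support_of_mem_edges h)
    have hvxyv : s(v,x) ≠ s(y,v) := by
      intro h
      rw [Sym2.eq_iff] at h
      rcases h with ⟨rfl, rfl⟩ | ⟨-, h2⟩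
      · exact hy.ne rfl
      · exact hxy h2
    have hcyc : c.IsCycle := by
      constructor
      · constructor
        · constructor
          rw [hedges]
          refine List.nodup_cons.mpr ⟨?_, ?_⟩
          · simp only [List.mem_append, List.mem_singleton]
            rintro (h | h)
            exacts [hvxP h, hvxyv h]
          · exact List.Nodup.append hP.edges_nodup (List.nodup_singleton _)
              (fun a ha hb => by
                simp only [List.mem_singleton] at hb
                subst hb
                exact hyvP ha)
        · simp [hcdef]
      · have : c.support.tail = P.support ++ [v] := by rw [hsupp]; rfl
        rw [this]
        exact List.Nodup.append hP.support_nodup (List.nodup_singleton _)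
          (fun a ha hb => by
            simp only [List.mem_singleton] at hb
            subst hb
            exact hvP ha)
    refine Relation.EqvGen.rel _ _ ⟨v, c, hcyc, ?_, ?_⟩
    · rw [hedges]; exact List.mem_cons_self
    · show s(v,y) ∈ c.edges
      rw [hedges]
      have : (s(v,y) : Sym2 V) = s(y,v) := Sym2.eq_swap
      rw [this]
      simp

/-- the chosen edge of a covering class -/
noncomputable def coverEdge {C : Cl G} {v : V} (h : Covers G C v) : G.edgeSet := h.choose

lemma coverEdge_spec {C : Cl G} {v : V} (h : Covers G C v) :
    Quotient.mk (Relation.EqvGen.setoid G.OnCommonCycle) (coverEdge h) = C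
      ∧ v ∈ (coverEdge h : Sym2 V) := h.choose_spec

/-- the other endpoint of the chosen edge -/
noncomputable def coverPt {C : Cl G} {v : V} (h : Covers G C v) : V :=
  Sym2.Mem.other (coverEdge_spec h).2

lemma coverPt_adj {C : Cl G} {v : V} (h : Covers G C v) : G.Adj v (coverPt h) := by
  have h1 := Sym2.other_spec (coverEdge_spec h).2
  have h2 := (coverEdge h).2
  rw [← h1] at h2
  exact h2

lemma coverPt_edge_eq {C : Cl G} {v : V} (h : Covers G C v) :
    (coverEdge h : Sym2 V) = s(v, coverPt h) := (Sym2.other_spec (coverEdge_spec h).2).symm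

lemma coverPt_ne {C : Cl G} {v : V} (h : Covers G C v) : coverPt h ≠ v :=
  (coverPt_adj h).ne'

lemma walk_cons_decomp {a b : V} (p : G.Walk a b) (h : ¬ p.Nil) :
    ∃ (c : V) (hadj : G.Adj a c) (q : G.Walk c b), p = SimpleGraph.Walk.cons hadj q := by
  cases p with
  | nil => simp at h
  | cons h q => exact ⟨_, _, q, rfl⟩

/-- Fact 1: the number of connected components of `G - v` equals the number of
circuit classes covering `v`. -/
lemma card_components_eq (hG : G.Connected) (v : V) :
    Nat.card (G.induce ({v}ᶜ : Set V)).ConnectedComponent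
      = Nat.card {C : Cl G // Covers G C v} := by
  have hbij : Function.Bijective
      (fun p : {C : Cl G // Covers G C v} =>
        (G.induce ({v}ᶜ : Set V)).connectedComponentMk ⟨coverPt p.2, coverPt_ne p.2⟩) := by
    constructor
    · rintro ⟨C1, h1⟩ ⟨C2, h2⟩ hf
      simp only [SimpleGraph.ConnectedComponent.eq] at hf
      have h1e := coverEdge_spec h1
      have h2e := coverEdge_spec h2
      have hadj1 := coverPt_adj h1
      have hadj2 := coverPt_adj h2
      have heq := eqvGen_of_adj_reach v hadj1 hadj2 hf
      have hc1 : coverEdge h1 = (⟨s(v, coverPt h1), hadj1⟩ : G.edgeSet) :=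
        Subtype.ext (coverPt_edge_eq h1)
      have hc2 : coverEdge h2 = (⟨s(v, coverPt h2), hadj2⟩ : G.edgeSet) :=
        Subtype.ext (coverPt_edge_eq h2)
      have : Quotient.mk (Relation.EqvGen.setoid G.OnCommonCycle) (coverEdge h1)
          = Quotient.mk (Relation.EqvGen.setoid G.OnCommonCycle) (coverEdge h2) := by
        rw [hc1, hc2]
        exact Quotient.sound heq
      apply Subtype.ext
      show C1 = C2
      rw [← h1e.1, ← h2e.1]
      exact this
    · intro K
      obtain ⟨⟨u, hu⟩, rfl⟩ := K.exists_rep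
      have huv : u ≠ v := hu
      -- find a neighbour of v in the same component as u
      obtain ⟨W⟩ := hG.preconnected u v
      have hvW : v ∈ W.support := W.end_mem_support
      set T : G.Walk u v := W.takeUntil v hvW with hT
      have hcount : T.support.count v = 1 := W.count_support_takeUntil_eq_one hvW
      -- decompose T from the end
      have hTnil : ¬ T.reverse.Nil := SimpleGraph.Walk.not_nil_of_ne (Ne.symm huv)
      obtain ⟨w, hadj, q, hq⟩ := walk_cons_decomp T.reverse hTnil
      have hvq : v ∉ q.support := by
        intro hmem
        have h1 : T.reverse.support = v :: q.support := by rw [hq]; rfl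
        have h2 : T.reverse.support.count v = 1 := by
          rw [SimpleGraph.Walk.support_reverse, List.count_reverse]
          exact hcount
        rw [h1] at h2
        simp only [List.count_cons_self] at h2
        have : q.support.count v = 0 := by omega
        exact (List.count_eq_zero.mp this) hmem
      have hreach : (G.induce ({v}ᶜ : Set V)).Reachable ⟨w, hadj.ne'⟩ ⟨u, huv⟩ :=
        reach_induce_compl_of_walk q hvq hadj.ne' huv
      set ew : G.edgeSet := ⟨s(v, w), hadj⟩ with hew
      set C : Cl G := Quotient.mk (Relation.EqvGen.setoid G.OnCommonCycle) ew with hC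
      have hcov : Covers G C v := ⟨ew, rfl, by simp [hew]⟩
      refine ⟨⟨C, hcov⟩, ?_⟩
      have heqv : Relation.EqvGen G.OnCommonCycle (coverEdge hcov) ew :=
        Quotient.exact ((coverEdge_spec hcov).1.trans hC)
      have hmemPt : coverPt hcov ∈ (coverEdge hcov : Sym2 V) :=
        Sym2.other_mem (coverEdge_spec hcov).2
      have hmemw : w ∈ (ew : Sym2 V) := by simp [hew]
      have hr2 : (G.induce ({v}ᶜ : Set V)).Reachable
          ⟨coverPt hcov, coverPt_ne hcov⟩ ⟨w, hadj.ne'⟩ :=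
        class_reach v heqv hmemPt hmemw (coverPt_ne hcov) hadj.ne'
      exact SimpleGraph.ConnectedComponent.sound (hr2.trans hreach)
  exact (Nat.card_eq_of_bijective _ hbij).symm

lemma walk_cons_decomp' {W : Type*} {H : SimpleGraph W} {a b : W} (p : H.Walk a b)
    (h : ¬ p.Nil) :
    ∃ (c : W) (hadj : H.Adj a c) (q : H.Walk c b), p = SimpleGraph.Walk.cons hadj q := by
  cases p with
  | nil => simp at h
  | cons h q => exact ⟨_, _, q, rfl⟩

/-- Key A: two non-`v` vertices covered by the same class are connected avoiding `v`. -/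
lemma covers_reach (v : V) {C : Cl G} {x y : V} (hx : Covers G C x) (hy : Covers G C y)
    (hxv : x ≠ v) (hyv : y ≠ v) :
    (G.induce ({v}ᶜ : Set V)).Reachable ⟨x, hxv⟩ ⟨y, hyv⟩ := by
  obtain ⟨e, he, hxe⟩ := hx
  obtain ⟨e', he', hye⟩ := hy
  exact class_reach v (Quotient.exact (he.trans he'.symm)) hxe hye hxv hyv

/-- B is connected. -/
lemma B_connected (hG : G.Connected) : (B G).Connected := by
  have hinl : ∀ u w : V, (B G).Reachable (Sum.inl u) (Sum.inl w) := by
    intro u w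
    obtain ⟨p⟩ := hG.preconnected u w
    induction p with
    | nil => rfl
    | @cons a c b h p ih =>
        have hcov : Covers G (Quotient.mk (Relation.EqvGen.setoid G.OnCommonCycle)
            ⟨s(a, c), h⟩) a := ⟨⟨s(a,c), h⟩, rfl, by simp⟩
        have hcov' : Covers G (Quotient.mk (Relation.EqvGen.setoid G.OnCommonCycle)
            ⟨s(a, c), h⟩) c := ⟨⟨s(a,c), h⟩, rfl, by simp⟩
        have h1 : (B G).Adj (Sum.inl a) (Sum.inr (Quotient.mk _ ⟨s(a,c), h⟩)) :=
          Or.inl ⟨a, _, hcov, rfl, rfl⟩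
        have h2 : (B G).Adj (Sum.inr (Quotient.mk _ ⟨s(a,c), h⟩)) (Sum.inl c) :=
          Or.inr ⟨c, _, hcov', rfl, rfl⟩
        exact (h1.reachable.trans h2.reachable).trans ih
  have hinr : ∀ C : Cl G, ∃ u : V, (B G).Adj (Sum.inr C) (Sum.inl u) := by
    intro C
    obtain ⟨e, he⟩ := C.exists_rep
    refine ⟨(e : Sym2 V).out.1, Or.inr ⟨(e : Sym2 V).out.1, C,
      ⟨e, he, Sym2.out_fst_mem _⟩, rfl, rfl⟩⟩
  have hne : Nonempty (V ⊕ Cl G) := ⟨Sum.inl hG.nonempty.some⟩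
  refine SimpleGraph.Connected.mk ?_
  · intro a b
    have key : ∀ a : V ⊕ Cl G, ∃ u : V, (B G).Reachable a (Sum.inl u) := by
      rintro (u | C)
      · exact ⟨u, SimpleGraph.Reachable.refl _⟩
      · obtain ⟨u, h⟩ := hinr C
        exact ⟨u, h.reachable⟩
    obtain ⟨u, hu⟩ := key a
    obtain ⟨w, hw⟩ := key b
    exact (hu.trans (hinl u w)).trans hw.symm

/-- `u` is a vertex represented by the node `x` of `B`. -/
def Touch (G : SimpleGraph V) (x : V ⊕ Cl G) (u : V) : Prop :=
  match x with
  | Sum.inl w => u = w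
  | Sum.inr D => Covers G D u

/-- Walks in `B` avoiding `inl v` connect the vertex sets of their endpoints
in `G - v`. -/
lemma B_walk_reach (v : V) {s t : V ⊕ Cl G} (W : (B G).Walk s t) :
    Sum.inl v ∉ W.support → ∀ {u u' : V}, Touch G s u → Touch G t u' →
    ∀ (huv : u ≠ v) (hu'v : u' ≠ v),
      (G.induce ({v}ᶜ : Set V)).Reachable ⟨u, huv⟩ ⟨u', hu'v⟩ := by
  induction W with
  | @nil a =>
      intro _ u u' hu hu' huv hu'v
      cases a with
      | inl w =>
          have h1 : u = w := hu
          have h2 : u' = w := hu'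
          subst h1
          subst h2
          rfl
      | inr D => exact covers_reach v hu hu' huv hu'v
  | @cons a t b h p ih =>
      intro hsup u u' hu hu' huv hu'v
      have hvp : Sum.inl v ∉ p.support := fun hm => hsup (List.mem_cons_of_mem _ hm)
      rcases h with ⟨w, D, hcov, rfl, rfl⟩ | ⟨w, D, hcov, rfl, rfl⟩
      · -- a = inl w, t = inr D
        have h1 : u = w := hu
        subst h1
        exact ih hvp hcov hu' huv hu'v
      · -- a = inr D, t = inl w
        have hwv : w ≠ v := by
          intro hwv
          subst hwv
          exact hsup (List.mem_cons_of_mem _ p.start_mem_support)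
        have h1 : (G.induce ({v}ᶜ : Set V)).Reachable ⟨u, huv⟩ ⟨w, hwv⟩ :=
          covers_reach v hu hcov huv hwv
        exact h1.trans (ih hvp rfl hu' hwv hu'v)

/-- B is acyclic. -/
lemma B_acyclic : (B G).IsAcyclic := by
  classical
  intro a c hc
  -- find an `inl` vertex on the cycle
  have hinl : ∃ w : V, Sum.inl w ∈ c.support := by
    obtain ⟨t, hadj, q, rfl⟩ := walk_cons_decomp' c hc.not_nil
    rcases hadj with ⟨w, D, hcov, rfl, rfl⟩ | ⟨w, D, hcov, heq, rfl⟩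
    · exact ⟨w, SimpleGraph.Walk.start_mem_support _⟩
    · exact ⟨w, List.mem_cons_of_mem _ (SimpleGraph.Walk.start_mem_support _)⟩
  obtain ⟨v, hv⟩ := hinl
  set c' := c.rotate (Sum.inl v) hv with hc'def
  have hcyc' : c'.IsCycle := hc.rotate hv
  clear_value c'
  clear hc'def hc hv c
  obtain ⟨t, hadj, p, rfl⟩ := walk_cons_decomp' c' hcyc'.not_nil
  obtain ⟨C1, hcovC1, rfl⟩ : ∃ C1, Covers G C1 v ∧ t = Sum.inr C1 := by
    rcases hadj with ⟨w, D, hcov, hl, rfl⟩ | ⟨w, D, hcov, hl, hr⟩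
    · obtain rfl : v = w := by injection hl
      exact ⟨D, hcov, rfl⟩
    · exact absurd hl (by simp)
  obtain ⟨x, q, hadj2, heq⟩ := SimpleGraph.Walk.exists_cons_eq_concat hadj p
  obtain ⟨Ck, hcovCk, rfl⟩ : ∃ Ck, Covers G Ck v ∧ x = Sum.inr Ck := by
    rcases hadj2 with ⟨w, D, hcov, rfl, hr⟩ | ⟨w, D, hcov, rfl, hr⟩
    · exact absurd hr (by simp)
    · obtain rfl : v = w := by injection hr
      exact ⟨D, hcov, rfl⟩
  -- q : Walk (inl v) (inr Ck); decompose q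
  have hqnil : ¬ q.Nil := SimpleGraph.Walk.not_nil_of_ne (by simp)
  obtain ⟨t1, hadj1, q1, rfl⟩ := walk_cons_decomp' q hqnil
  obtain ⟨C1', hcovC1', rfl⟩ : ∃ C1', Covers G C1' v ∧ t1 = Sum.inr C1' := by
    rcases hadj1 with ⟨w, D, hcov, hl, rfl⟩ | ⟨w, D, hcov, hl, hr⟩
    · obtain rfl : v = w := by injection hl
      exact ⟨D, hcov, rfl⟩
    · exact absurd hl (by simp)
  -- now  cons hadj p = (cons hadj1 q1).concat hadj2
  rw [SimpleGraph.Walk.concat_cons] at heq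
  have hedges : (SimpleGraph.Walk.cons hadj p).edges
      = s(Sum.inl v, Sum.inr C1') :: (q1.concat hadj2).edges := by rw [heq]; rfl
  have hsupp : (SimpleGraph.Walk.cons hadj p).support.tail
      = q1.support ++ [Sum.inl v] := by
    rw [heq]
    simp [SimpleGraph.Walk.support_concat, List.concat_eq_append]
  -- C1' ≠ Ck from trail
  have hC1Ck : C1' ≠ Ck := by
    rintro rfl
    have hnodup := hcyc'.edges_nodup
    rw [hedges] at hnodup
    have hmem : s(Sum.inl v, Sum.inr C1') ∈ (q1.concat hadj2).edges := by
      rw [SimpleGraph.Walk.edges_concat]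
      rw [List.concat_eq_append]
      refine List.mem_append_right _ ?_
      simp [Sym2.eq_swap]
    exact (List.nodup_cons.mp hnodup).1 hmem
  -- inl v ∉ q1.support
  have hvq1 : Sum.inl v ∉ q1.support := by
    have hnodup := hcyc'.support_nodup
    rw [hsupp] at hnodup
    intro hm
    exact (List.disjoint_of_nodup_append hnodup) hm (by simp)
  -- extract endpoints
  obtain ⟨e1, he1, hve1⟩ := hcovC1'
  obtain ⟨ek, hek, hvek⟩ := hcovCk
  have hne1 : ¬ (e1 : Sym2 V).IsDiag := G.not_isDiag_of_mem_edgeSet e1.2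
  have hnek : ¬ (ek : Sym2 V).IsDiag := G.not_isDiag_of_mem_edgeSet ek.2
  set x1 := Sym2.Mem.other hve1 with hx1
  set xk := Sym2.Mem.other hvek with hxk
  have hx1v : x1 ≠ v := Sym2.other_ne hne1 hve1
  have hxkv : xk ≠ v := Sym2.other_ne hnek hvek
  have hx1m : x1 ∈ (e1 : Sym2 V) := Sym2.other_mem hve1
  have hxkm : xk ∈ (ek : Sym2 V) := Sym2.other_mem hvek
  have hreach : (G.induce ({v}ᶜ : Set V)).Reachable ⟨x1, hx1v⟩ ⟨xk, hxkv⟩ :=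
    B_walk_reach v q1 hvq1 ⟨e1, he1, hx1m⟩ ⟨ek, hek, hxkm⟩ hx1v hxkv
  -- edges at v
  have hadjx1 : G.Adj v x1 := by
    have := Sym2.other_spec hve1
    have h2 := e1.2
    rw [← this] at h2
    exact h2
  have hadjxk : G.Adj v xk := by
    have := Sym2.other_spec hvek
    have h2 := ek.2
    rw [← this] at h2
    exact h2
  have heqv := eqvGen_of_adj_reach v hadjx1 hadjxk hreach
  apply hC1Ck
  have h1 : e1 = (⟨s(v, x1), hadjx1⟩ : G.edgeSet) := Subtype.ext (Sym2.other_spec hve1).symm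
  have hk : ek = (⟨s(v, xk), hadjxk⟩ : G.edgeSet) := Subtype.ext (Sym2.other_spec hvek).symm
  rw [← he1, ← hek, h1, hk]
  exact Quotient.sound heqv

/-- generic fiber-count lemma -/
lemma sum_card_fiber {α β : Type*} [Fintype α] [Fintype β] (f : α → β) :
    ∑ b : β, Nat.card {a // f a = b} = Nat.card α := by
  classical
  calc ∑ b : β, Nat.card {a // f a = b}
      = ∑ b : β, Fintype.card {a // f a = b} := by
        refine Finset.sum_congr rfl fun b _ => ?_
        exact Nat.card_eq_fintype_card
    _ = Fintype.card (Σ b : β, {a // f a = b}) := (Fintype.card_sigma).symm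
    _ = Fintype.card α := Fintype.card_congr (Equiv.sigmaFiberEquiv f)
    _ = Nat.card α := Nat.card_eq_fintype_card.symm

section Counting
variable [Fintype V]

/-- the edges of `B` are the covering incidences -/
lemma B_edge_equiv :
    Function.Bijective (fun p : {x : V × Cl G // Covers G x.2 x.1} =>
      (⟨s(Sum.inl p.1.1, Sum.inr p.1.2),
        Or.inl ⟨p.1.1, p.1.2, p.2, rfl, rfl⟩⟩ : (B G).edgeSet)) := by
  constructor
  · rintro ⟨⟨v1, C1⟩, h1⟩ ⟨⟨v2, C2⟩, h2⟩ h
    have h' : s(Sum.inl v1, Sum.inr C1) = (s(Sum.inl v2, Sum.inr C2) : Sym2 (V ⊕ Cl G)) :=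
      congrArg Subtype.val h
    rw [Sym2.eq_iff] at h'
    rcases h' with ⟨ha, hb⟩ | ⟨ha, hb⟩
    · apply Subtype.ext
      simp only [Sum.inl.injEq] at ha
      simp only [Sum.inr.injEq] at hb
      simp [ha, hb]
    · exact absurd ha (by simp)
  · rintro ⟨e, he⟩
    revert he
    induction e using Sym2.ind with
    | _ a b =>
        intro he
        rcases he with ⟨w, C, hcov, ha, hb⟩ | ⟨w, C, hcov, ha, hb⟩ <;>
          refine ⟨⟨(w, C), hcov⟩, Subtype.ext ?_⟩
        · show s(Sum.inl w, Sum.inr C) = (s(a, b) : Sym2 (V ⊕ Cl G))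
          rw [show a = Sum.inl w from ha, show b = Sum.inr C from hb]
        · show s(Sum.inl w, Sum.inr C) = (s(a, b) : Sym2 (V ⊕ Cl G))
          rw [show a = Sum.inr C from ha, show b = Sum.inl w from hb]
          exact Sym2.eq_swap

/-- per-vertex fiber of the incidence set -/
def coverFiberEquiv (v : V) :
    {p : {x : V × Cl G // Covers G x.2 x.1} // p.1.1 = v} ≃ {C : Cl G // Covers G C v} where
  toFun p := ⟨p.1.1.2, by
    obtain ⟨⟨⟨a, C⟩, h⟩, h2⟩ := p
    dsimp only at h2 ⊢
    subst h2
    exact h⟩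
  invFun C := ⟨⟨(v, C.1), C.2⟩, rfl⟩
  left_inv := by rintro ⟨⟨⟨a, C⟩, h⟩, rfl⟩; rfl
  right_inv := by rintro ⟨C, h⟩; rfl

lemma sum_covers_eq_card_edges :
    ∑ v : V, Nat.card {C : Cl G // Covers G C v} = Nat.card (B G).edgeSet := by
  classical
  letI : Fintype (Cl G) := Fintype.ofFinite _
  letI : Fintype {x : V × Cl G // Covers G x.2 x.1} := Fintype.ofFinite _
  have h1 : ∀ v : V, Nat.card {C : Cl G // Covers G C v}
      = Nat.card {p : {x : V × Cl G // Covers G x.2 x.1} // p.1.1 = v} :=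
    fun v => (Nat.card_congr (coverFiberEquiv v)).symm
  calc ∑ v : V, Nat.card {C : Cl G // Covers G C v}
      = ∑ v : V, Nat.card {p : {x : V × Cl G // Covers G x.2 x.1} // p.1.1 = v} := by
        exact Finset.sum_congr rfl fun v _ => h1 v
    _ = Nat.card {x : V × Cl G // Covers G x.2 x.1} := sum_card_fiber _
    _ = Nat.card (B G).edgeSet := Nat.card_eq_of_bijective _ B_edge_equiv

lemma card_edges_B (hG : G.Connected) :
    Nat.card (B G).edgeSet + 1 = Fintype.card V + Nat.card (Cl G) := by
  classical
  letI : Fintype (Cl G) := Fintype.ofFinite _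
  letI : Fintype (B G).edgeSet := Fintype.ofFinite _
  have htree : (B G).IsTree := ⟨B_connected hG, B_acyclic⟩
  have := htree.card_edgeFinset
  rw [SimpleGraph.edgeFinset, Set.toFinset_card] at this
  rw [Nat.card_eq_fintype_card, this, Fintype.card_sum, Nat.card_eq_fintype_card]

/-- the sum over circuit classes -/
lemma class_sum :
    ∑ᶠ c ∈ Setoid.classes (Relation.EqvGen.setoid G.OnCommonCycle), ((c.ncard : ℤ) - 1)
      = (Nat.card G.edgeSet : ℤ) - (Nat.card (Cl G) : ℤ) := by
  classical
  set S := Relation.EqvGen.setoid G.OnCommonCycle with hS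
  letI : Fintype G.edgeSet := Fintype.ofFinite _
  letI : Fintype (Cl G) := Fintype.ofFinite _
  set g : Cl G → Set G.edgeSet := fun q => {x | Quotient.mk S x = q} with hg
  have hrange : Setoid.classes S = Set.range g := by
    ext s
    constructor
    · rintro ⟨y, rfl⟩
      refine ⟨Quotient.mk S y, ?_⟩
      ext x
      simp only [hg, Set.mem_setOf_eq]
      exact Quotient.eq (r := S)
    · rintro ⟨q, rfl⟩
      obtain ⟨y, rfl⟩ := q.exists_rep
      refine ⟨y, ?_⟩
      ext x
      simp only [hg, Set.mem_setOf_eq]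
      exact Quotient.eq (r := S)
  have hginj : Function.Injective g := by
    intro q q' h
    obtain ⟨a, rfl⟩ := q.exists_rep
    have ha : a ∈ g (Quotient.mk S a) := rfl
    rw [h] at ha
    exact ha
  rw [hrange, finsum_mem_range hginj, finsum_eq_sum_of_fintype, Finset.sum_sub_distrib]
  have h1 : ∑ q : Cl G, ((g q).ncard : ℤ) = (Nat.card G.edgeSet : ℤ) := by
    rw [← Nat.cast_sum]
    congr 1
    have : ∀ q : Cl G, (g q).ncard = Nat.card {x // Quotient.mk S x = q} := by
      intro q
      rw [← Nat.card_coe_set_eq]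
      rfl
    rw [Finset.sum_congr rfl fun q _ => this q]
    exact sum_card_fiber _
  rw [h1]
  have h2 : ∑ _q : Cl G, (1 : ℤ) = (Fintype.card (Cl G) : ℤ) := by simp
  rw [h2, Nat.card_eq_fintype_card, Nat.card_eq_fintype_card]

end Counting

end CircuitAux

/-- **The combinatorial identity of Section 4 (loop-free case).**
Let `G` be a finite connected simple graph, and let `~` be the smallest equivalence relation
on the edge set identifying two edges lying on a common cycle (so its classes are the maximal
circuit-connected subsets of the edge set).  Then
`Σ_{C ∈ E/~} (|C| − 1) = |E| + |V| − Σ_{v ∈ V} c(G − v) − 1`,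
where `c(G − v)` is the number of connected components of `G` with the vertex `v` deleted. -/
theorem sum_card_circuit_classes_sub_one
    {V : Type*} [Fintype V] [DecidableEq V] (G : SimpleGraph V) (hG : G.Connected) :
    ∑ᶠ c ∈ Setoid.classes (Relation.EqvGen.setoid G.OnCommonCycle),
        ((c.ncard : ℤ) - 1)
      = (Nat.card G.edgeSet : ℤ) + (Fintype.card V : ℤ)
        - (∑ v : V, (Nat.card (G.induce ({v}ᶜ : Set V)).ConnectedComponent : ℤ)) - 1 := by
  classical
  have h3 : ∑ v : V, Nat.card (G.induce ({v}ᶜ : Set V)).ConnectedComponent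
      = Nat.card (CircuitAux.B G).edgeSet := by
    rw [Finset.sum_congr rfl fun v _ => CircuitAux.card_components_eq hG v]
    exact CircuitAux.sum_covers_eq_card_edges
  have h4 := CircuitAux.card_edges_B hG
  rw [CircuitAux.class_sum]
  have h5 : (∑ v : V, (Nat.card (G.induce ({v}ᶜ : Set V)).ConnectedComponent : ℤ))
      = (Nat.card (CircuitAux.B G).edgeSet : ℤ) := by
    rw [← Nat.cast_sum]
    exact_mod_cast congrArg (fun n : ℕ => (n : ℤ)) h3
  rw [h5]
  have h4' : (Nat.card (CircuitAux.B G).edgeSet : ℤ) + 1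
      = (Fintype.card V : ℤ) + (Nat.card (CircuitAux.Cl G) : ℤ) := by exact_mod_cast h4
  linarith
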